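/- Let G be a finite simple graph with surplus(G) ≥ 1, let Z be a nonempty independent set of G with |N(Z)| = |Z| + 1 such that N(Z) is also an independent set of G, and let G' be the struction graph obtained from G and Z. Then MM(G') − 2·LP(G') ≤ MM(G) − 2·LP(G) + |Z|. -/

import Mathlib

open scoped Classical

/-- A fractional vertex cover of `G`. -/
def IsFVC {V : Type} (G : SimpleGraph V) (x : V → ℝ) : Prop :=
  (∀ v, 0 ≤ x v ∧ x v ≤ 1) ∧ ∀ ⦃u v⦄, G.Adj u v → 1 ≤ x u + x v

/-- The weight of a fractional vertex cover. -/
noncomputable def fvcWeight {V : Type} [Fintype V] (x : V → ℝ) : ℝ := ∑ v, x v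

/-- `LP(G)`: the minimum weight of a fractional vertex cover of `G`. -/
noncomputable def LPopt {V : Type} [Fintype V] (G : SimpleGraph V) : ℝ :=
  sInf {w : ℝ | ∃ x : V → ℝ, IsFVC G x ∧ w = fvcWeight x}

/-- A matching of `G`: a set of pairwise vertex-disjoint edges of `G`. -/
def IsMatchingSet {V : Type} (G : SimpleGraph V) (M : Finset (Sym2 V)) : Prop :=
  (∀ e ∈ M, e ∈ G.edgeSet) ∧ ∀ e ∈ M, ∀ f ∈ M, e ≠ f → ∀ v : V, v ∈ e → v ∉ f

/-- `MM(G)`: the maximum size of a matching of `G`. -/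
noncomputable def MMnum {V : Type} (G : SimpleGraph V) : ℕ :=
  sSup {n : ℕ | ∃ M : Finset (Sym2 V), IsMatchingSet G M ∧ M.card = n}

/-- `OPT(G)`: the minimum size of a vertex cover of `G`. -/
noncomputable def VCnum {V : Type} (G : SimpleGraph V) : ℕ :=
  sInf {n : ℕ | ∃ S : Finset V, (∀ ⦃u v⦄, G.Adj u v → u ∈ S ∨ v ∈ S) ∧ S.card = n}

/-- `N(X)`: the set of vertices outside `X` having a neighbour in `X`. -/
def nbhd {V : Type} (G : SimpleGraph V) (X : Set V) : Set V :=
  {v | v ∉ X ∧ ∃ u ∈ X, G.Adj u v}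

/-- `X` is an independent set in `G`. -/
def IndepSet {V : Type} (G : SimpleGraph V) (X : Set V) : Prop :=
  ∀ u ∈ X, ∀ v ∈ X, ¬ G.Adj u v

/-- `surplus(G) ≥ s`: every nonempty independent set `X` satisfies `|N(X)| ≥ |X| + s`. -/
def SurplusGE {V : Type} (G : SimpleGraph V) (s : ℕ) : Prop :=
  ∀ X : Set V, X.Nonempty → IndepSet G X → X.ncard + s ≤ (nbhd G X).ncard

/-- The matching `M` saturates the vertex `v`. -/
def Saturates {V : Type} (M : Finset (Sym2 V)) (v : V) : Prop := ∃ e ∈ M, v ∈ e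

/-- `O(G)`: vertices left unsaturated by some maximum matching of `G`. -/
def OSet {V : Type} (G : SimpleGraph V) : Set V :=
  {v | ∃ M : Finset (Sym2 V), IsMatchingSet G M ∧ M.card = MMnum G ∧ ¬ Saturates M v}

/-- `I(G)`: vertices outside `O(G)` having a neighbour in `O(G)`. -/
def ISet {V : Type} (G : SimpleGraph V) : Set V := nbhd G (OSet G)

/-- `P(G)`: the remaining vertices. -/
def GEPSet {V : Type} (G : SimpleGraph V) : Set V := (OSet G ∪ ISet G)ᶜ

/-- The struction graph obtained from `G` and `Z`: delete `Z`, identify `N(Z)`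
into a single new vertex `z` adjacent to exactly those remaining vertices that are
adjacent in `G` to some vertex of `N(Z)`. -/
def struction {V : Type} (G : SimpleGraph V) (Z : Set V) :
    SimpleGraph (((Z ∪ nbhd G Z)ᶜ : Set V) ⊕ Unit) where
  Adj a b :=
    match a, b with
    | Sum.inl u, Sum.inl v => G.Adj u.1 v.1
    | Sum.inl u, Sum.inr _ => ∃ w ∈ nbhd G Z, G.Adj w u.1
    | Sum.inr _, Sum.inl v => ∃ w ∈ nbhd G Z, G.Adj w v.1
    | Sum.inr _, Sum.inr _ => False
  symm := by
    refine ⟨?_⟩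
    rintro (u | u) (v | v) h
    · exact h.symm
    · exact h
    · exact h
    · exact h
  loopless := by
    refine ⟨?_⟩
    rintro (u | u) h
    · exact G.loopless.irrefl u.1 h
    · exact h

lemma mm_set_nonempty {V : Type} (G : SimpleGraph V) :
    {n : ℕ | ∃ M : Finset (Sym2 V), IsMatchingSet G M ∧ M.card = n}.Nonempty :=
  ⟨0, ∅, ⟨fun e he => absurd he (Finset.notMem_empty e),
    fun e he => absurd he (Finset.notMem_empty e)⟩, rfl⟩

lemma mm_set_bddAbove {V : Type} [Finite V] (G : SimpleGraph V) :
    BddAbove {n : ℕ | ∃ M : Finset (Sym2 V), IsMatchingSet G M ∧ M.card = n} := by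
  haveI : Fintype V := Fintype.ofFinite V
  refine ⟨Fintype.card (Sym2 V), ?_⟩
  rintro n ⟨M, _, rfl⟩
  exact Finset.card_le_univ M

lemma card_le_MMnum {V : Type} [Finite V] (G : SimpleGraph V) {M : Finset (Sym2 V)}
    (h : IsMatchingSet G M) : M.card ≤ MMnum G :=
  le_csSup (mm_set_bddAbove G) ⟨M, h, rfl⟩

lemma exists_max_matching {V : Type} [Finite V] (G : SimpleGraph V) :
    ∃ M : Finset (Sym2 V), IsMatchingSet G M ∧ M.card = MMnum G :=
  Nat.sSup_mem (mm_set_nonempty G) (mm_set_bddAbove G)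

lemma lp_set_nonempty {V : Type} [Fintype V] (G : SimpleGraph V) :
    {w : ℝ | ∃ x : V → ℝ, IsFVC G x ∧ w = fvcWeight x}.Nonempty :=
  ⟨fvcWeight (fun _ => (1:ℝ)), fun _ => (1:ℝ),
    ⟨fun _ => ⟨zero_le_one, le_refl 1⟩, fun _ _ _ => by norm_num⟩, rfl⟩

lemma lp_set_bddBelow {V : Type} [Fintype V] (G : SimpleGraph V) :
    BddBelow {w : ℝ | ∃ x : V → ℝ, IsFVC G x ∧ w = fvcWeight x} := by
  refine ⟨0, ?_⟩
  rintro w ⟨x, hx, rfl⟩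
  exact Finset.sum_nonneg fun v _ => (hx.1 v).1

lemma LPopt_le {V : Type} [Fintype V] (G : SimpleGraph V) {x : V → ℝ} (h : IsFVC G x) :
    LPopt G ≤ fvcWeight x :=
  csInf_le (lp_set_bddBelow G) ⟨x, h, rfl⟩

lemma le_LPopt {V : Type} [Fintype V] (G : SimpleGraph V) {c : ℝ}
    (h : ∀ x : V → ℝ, IsFVC G x → c ≤ fvcWeight x) : c ≤ LPopt G :=
  le_csInf (lp_set_nonempty G) (by rintro w ⟨x, hx, rfl⟩; exact h x hx)

lemma adj_mem_nbhd {V : Type} {G : SimpleGraph V} {Z : Set V} (hZind : IndepSet G Z)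
    {u v : V} (hu : u ∈ Z) (h : G.Adj u v) : v ∈ nbhd G Z := by
  refine ⟨fun hv => hZind u hu v hv h, u, hu, h⟩

lemma fvc_transfer {V : Type} [Fintype V] (G : SimpleGraph V) (Z : Set V)
    (hZind : IndepSet G Z) (hZsur : (nbhd G Z).ncard = Z.ncard + 1)
    (hNind : IndepSet G (nbhd G Z)) (x' : (((Z ∪ nbhd G Z)ᶜ : Set V) ⊕ Unit) → ℝ)
    (hx' : IsFVC (struction G Z) x') :
    ∃ x : V → ℝ, IsFVC G x ∧ fvcWeight x = fvcWeight x' + Z.ncard := by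
  have htb : 0 ≤ x' (Sum.inr ()) ∧ x' (Sum.inr ()) ≤ 1 := hx'.1 _
  have hNZ : ∀ w ∈ nbhd G Z, w ∉ Z := fun w hw => hw.1
  have hZnC : ∀ w ∈ Z, w ∉ ((Z ∪ nbhd G Z)ᶜ : Set V) := fun w hw hc => hc (Or.inl hw)
  have hNnC : ∀ w ∈ nbhd G Z, w ∉ ((Z ∪ nbhd G Z)ᶜ : Set V) := fun w hw hc => hc (Or.inr hw)
  have hcases : ∀ w : V, w ∈ ((Z ∪ nbhd G Z)ᶜ : Set V) ∨ w ∈ Z ∨ w ∈ nbhd G Z := by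
    intro w
    by_cases h1 : w ∈ Z
    · exact Or.inr (Or.inl h1)
    by_cases h2 : w ∈ nbhd G Z
    · exact Or.inr (Or.inr h2)
    · exact Or.inl (by simp only [Set.mem_compl_iff, Set.mem_union]; tauto)
  classical
  set x : V → ℝ := fun v => if h : v ∈ ((Z ∪ nbhd G Z)ᶜ : Set V) then x' (Sum.inl ⟨v, h⟩)
      else if v ∈ Z then 1 - x' (Sum.inr ()) else x' (Sum.inr ()) with hxdef
  have hxC : ∀ (v : V) (h : v ∈ ((Z ∪ nbhd G Z)ᶜ : Set V)), x v = x' (Sum.inl ⟨v, h⟩) :=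
    fun v h => dif_pos h
  have hxZ : ∀ v ∈ Z, x v = 1 - x' (Sum.inr ()) := by
    intro v hv
    simp only [hxdef, dif_neg (hZnC v hv), if_pos hv]
  have hxN : ∀ v ∈ nbhd G Z, x v = x' (Sum.inr ()) := by
    intro v hv
    simp only [hxdef, dif_neg (hNnC v hv), if_neg (hNZ v hv)]
  refine ⟨x, ⟨?_, ?_⟩, ?_⟩
  · intro v
    rcases hcases v with h | h | h
    · rw [hxC v h]; exact hx'.1 (Sum.inl ⟨v, h⟩)
    · rw [hxZ v h]; constructor <;> linarith [htb.1, htb.2]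
    · rw [hxN v h]; exact htb
  · intro u v hadj
    have key : ∀ (a b : V) (ha : a ∈ ((Z ∪ nbhd G Z)ᶜ : Set V)) (hb : b ∈ nbhd G Z),
        G.Adj a b → 1 ≤ x' (Sum.inl ⟨a, ha⟩) + x' (Sum.inr ()) := by
      intro a b ha hb h
      exact hx'.2 (show (struction G Z).Adj (Sum.inl ⟨a, ha⟩) (Sum.inr ()) from ⟨b, hb, h.symm⟩)
    rcases hcases u with hu | hu | hu <;> rcases hcases v with hv | hv | hv
    · rw [hxC u hu, hxC v hv]
      exact hx'.2 (show (struction G Z).Adj (Sum.inl ⟨u, hu⟩) (Sum.inl ⟨v, hv⟩) from hadj)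
    · exact absurd (adj_mem_nbhd hZind hv hadj.symm) (fun h => hu (Or.inr h))
    · rw [hxC u hu, hxN v hv]; exact key u v hu hv hadj
    · exact absurd (adj_mem_nbhd hZind hu hadj) (fun h => hv (Or.inr h))
    · exact absurd hadj (hZind u hu v hv)
    · rw [hxZ u hu, hxN v hv]; linarith
    · rw [hxN u hu, hxC v hv]; linarith [key v u hv hu hadj.symm]
    · rw [hxN u hu, hxZ v hv]; linarith
    · exact absurd hadj (hNind u hu v hv)
  · -- weight computation
    have hdisj : Disjoint Z.toFinset (nbhd G Z).toFinset := by
      rw [Finset.disjoint_left]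
      intro a ha hb
      rw [Set.mem_toFinset] at ha hb
      exact hb.1 ha
    have hsplit : fvcWeight x
        = ∑ v ∈ (Z ∪ nbhd G Z).toFinset, x v + ∑ v ∈ ((Z ∪ nbhd G Z).toFinset)ᶜ, x v :=
      (Finset.sum_add_sum_compl _ _).symm
    have hsum1 : ∑ v ∈ (Z ∪ nbhd G Z).toFinset, x v
        = ∑ v ∈ Z.toFinset, x v + ∑ v ∈ (nbhd G Z).toFinset, x v := by
      rw [Set.toFinset_union, Finset.sum_union hdisj]
    have hsumZ : ∑ v ∈ Z.toFinset, x v = (Z.ncard : ℝ) * (1 - x' (Sum.inr ())) := by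
      rw [Finset.sum_congr rfl (fun v hv => hxZ v (Set.mem_toFinset.mp hv)),
        Finset.sum_const, Set.ncard_eq_toFinset_card' Z, nsmul_eq_mul]
    have hsumN : ∑ v ∈ (nbhd G Z).toFinset, x v = ((Z.ncard : ℝ) + 1) * x' (Sum.inr ()) := by
      rw [Finset.sum_congr rfl (fun v hv => hxN v (Set.mem_toFinset.mp hv)),
        Finset.sum_const, nsmul_eq_mul]
      norm_cast
      rw [← Set.ncard_eq_toFinset_card' (nbhd G Z), hZsur]
    have hsumC : ∑ v ∈ ((Z ∪ nbhd G Z).toFinset)ᶜ, x v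
        = ∑ a : ((Z ∪ nbhd G Z)ᶜ : Set V), x' (Sum.inl a) := by
      rw [← Set.toFinset_compl]
      rw [show (((Z ∪ nbhd G Z)ᶜ : Set V)).toFinset
          = {w : V | w ∈ ((Z ∪ nbhd G Z)ᶜ : Set V)}.toFinset from rfl]
      rw [Finset.sum_toFinset_eq_subtype (fun w => w ∈ ((Z ∪ nbhd G Z)ᶜ : Set V)) x]
      refine Finset.sum_congr ?_ (fun a _ => ?_)
      · congr!
      · rw [hxC a.1 a.2]
    have hw' : fvcWeight x' = ∑ a : ((Z ∪ nbhd G Z)ᶜ : Set V), x' (Sum.inl a)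
        + x' (Sum.inr ()) := by
      rw [fvcWeight, Fintype.sum_sum_type]
      congr 1
      all_goals first
        | simp
        | congr!
    rw [hsplit, hsum1, hsumZ, hsumN, hsumC, hw']
    ring

lemma hall_matching {V : Type} [Fintype V] (G : SimpleGraph V) (Z : Set V)
    (hsur : SurplusGE G 1) (hZind : IndepSet G Z) (w : V) :
    ∃ f : Z → V, Function.Injective f ∧
      ∀ u : Z, f u ∈ nbhd G Z ∧ f u ≠ w ∧ G.Adj u.1 (f u) := by
  classical
  set t : Z → Finset V :=
    fun u => ((nbhd G Z).toFinset.erase w).filter (fun v => G.Adj u.1 v) with htdef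
  have hall : ∀ s : Finset Z, s.card ≤ (s.biUnion t).card := by
    intro s
    rcases s.eq_empty_or_nonempty with rfl | hs
    · simp
    set X : Set V := (↑(s.image Subtype.val) : Set V) with hXdef
    have hXsub : X ⊆ Z := by
      intro v hv
      simp only [hXdef, Finset.coe_image, Set.mem_image, Finset.mem_coe] at hv
      obtain ⟨u, _, rfl⟩ := hv
      exact u.2
    have hXne : X.Nonempty := by
      obtain ⟨u, hu⟩ := hs
      refine ⟨u.1, ?_⟩
      simp only [hXdef, Finset.coe_image, Set.mem_image, Finset.mem_coe]
      exact ⟨u, hu, rfl⟩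
    have hXind : IndepSet G X := fun a ha b hb => hZind a (hXsub ha) b (hXsub hb)
    have h1 : X.ncard + 1 ≤ (nbhd G X).ncard := hsur X hXne hXind
    have hXcard : X.ncard = s.card := by
      rw [hXdef, Set.ncard_coe_finset, Finset.card_image_of_injective s Subtype.val_injective]
    have hsubN : (nbhd G X).toFinset.erase w ⊆ s.biUnion t := by
      intro v hv
      rw [Finset.mem_erase, Set.mem_toFinset] at hv
      obtain ⟨hvw, hvX, u, huX, huv⟩ := hv
      have huZ : u ∈ Z := hXsub huX
      have hvN : v ∈ nbhd G Z := adj_mem_nbhd hZind huZ huv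
      simp only [hXdef, Finset.coe_image, Set.mem_image, Finset.mem_coe] at huX
      obtain ⟨u', hu's, rfl⟩ := huX
      refine Finset.mem_biUnion.mpr ⟨u', hu's, ?_⟩
      rw [htdef]
      simp only [Finset.mem_filter, Finset.mem_erase, Set.mem_toFinset]
      exact ⟨⟨hvw, hvN⟩, huv⟩
    have h2 : (nbhd G X).toFinset.card - 1 ≤ ((nbhd G X).toFinset.erase w).card :=
      Finset.pred_card_le_card_erase
    have h3 : (nbhd G X).toFinset.card = (nbhd G X).ncard :=
      (Set.ncard_eq_toFinset_card' _).symm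
    have h4 := Finset.card_le_card hsubN
    omega
  obtain ⟨f, hfinj, hft⟩ := (Finset.all_card_le_biUnion_card_iff_exists_injective t).mp hall
  refine ⟨f, hfinj, fun u => ?_⟩
  have := hft u
  rw [htdef] at this
  simp only [Finset.mem_filter, Finset.mem_erase, Set.mem_toFinset] at this
  exact ⟨this.1.2, this.1.1, this.2⟩

lemma mm_transfer {V : Type} [Fintype V] (G : SimpleGraph V) (Z : Set V)
    (hsur : SurplusGE G 1) (hZne : Z.Nonempty) (hZind : IndepSet G Z)
    (hZsur : (nbhd G Z).ncard = Z.ncard + 1) :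
    MMnum (struction G Z) + Z.ncard ≤ MMnum G := by
  classical
  obtain ⟨M', hM', hM'card⟩ := exists_max_matching (struction G Z)
  have hNne : (nbhd G Z).Nonempty := Set.nonempty_of_ncard_ne_zero (by omega)
  -- choose w
  have hzedge : ∃ w ∈ nbhd G Z, ∀ u : ((Z ∪ nbhd G Z)ᶜ : Set V),
      s(Sum.inl u, (Sum.inr () : ((Z ∪ nbhd G Z)ᶜ : Set V) ⊕ Unit)) ∈ M' → G.Adj w u.1 := by
    by_cases hz : ∃ e0 ∈ M', (Sum.inr () : ((Z ∪ nbhd G Z)ᶜ : Set V) ⊕ Unit) ∈ e0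
    · obtain ⟨e0, he0, hze0⟩ := hz
      have hspec := Sym2.other_spec hze0
      have hadj0 : (struction G Z).Adj (Sum.inr ()) (Sym2.Mem.other hze0) := by
        have h1 := hM'.1 e0 he0
        rw [← hspec, SimpleGraph.mem_edgeSet] at h1
        exact h1
      rcases hother : Sym2.Mem.other hze0 with u0 | u0
      · rw [hother] at hadj0 hspec
        obtain ⟨w, hwN, hwadj⟩ := hadj0
        refine ⟨w, hwN, fun u hu => ?_⟩
        have hzmem : (Sum.inr () : ((Z ∪ nbhd G Z)ᶜ : Set V) ⊕ Unit) ∈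
            s(Sum.inl u, (Sum.inr () : ((Z ∪ nbhd G Z)ᶜ : Set V) ⊕ Unit)) :=
          Sym2.mem_mk_right _ _
        by_cases heq : s(Sum.inl u, (Sum.inr () : ((Z ∪ nbhd G Z)ᶜ : Set V) ⊕ Unit)) = e0
        · rw [← hspec] at heq
          rcases Sym2.eq_iff.mp heq with ⟨h1, _⟩ | ⟨h1, _⟩
          · exact absurd h1 (by simp)
          · obtain rfl : u = u0 := Sum.inl.inj h1
            exact hwadj
        · exact absurd hze0 (hM'.2 _ hu e0 he0 heq _ hzmem)
      · rw [hother] at hadj0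
        exact hadj0.elim
    · refine ⟨hNne.choose, hNne.choose_spec, fun u hu => ?_⟩
      exact absurd ⟨_, hu, Sym2.mem_mk_right _ _⟩ hz
  obtain ⟨w, hwN, hkey⟩ := hzedge
  obtain ⟨f, hfinj, hf⟩ := hall_matching G Z hsur hZind w
  -- the lifting map
  set g : (((Z ∪ nbhd G Z)ᶜ : Set V) ⊕ Unit) → V :=
    Sum.elim (fun u => u.1) (fun _ => w) with hgdef
  have hwC : w ∉ ((Z ∪ nbhd G Z)ᶜ : Set V) := fun hc => hc (Or.inr hwN)
  have ginj : Function.Injective g := by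
    rintro (a | a) (b | b) h <;>
      simp only [hgdef, Sum.elim_inl, Sum.elim_inr] at h
    · exact congrArg Sum.inl (Subtype.ext h)
    · exact absurd (show w ∈ ((Z ∪ nbhd G Z)ᶜ : Set V) from h ▸ a.2) hwC
    · exact absurd (show w ∈ ((Z ∪ nbhd G Z)ᶜ : Set V) from h.symm ▸ b.2) hwC
    · rfl
  set MZ : Finset (Sym2 V) := Finset.univ.image (fun u : Z => s(u.1, f u)) with hMZdef
  set ML : Finset (Sym2 V) := M'.image (Sym2.map g) with hMLdef
  -- vertex classes
  have hclassL : ∀ e ∈ M', ∀ v : V, v ∈ Sym2.map g e →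
      v ∈ ((Z ∪ nbhd G Z)ᶜ : Set V) ∨ v = w := by
    intro e _ v hv
    obtain ⟨a, _, rfl⟩ := Sym2.mem_map.mp hv
    rcases a with u | u
    · exact Or.inl u.2
    · exact Or.inr rfl
  have hcross : ∀ v : V, (v ∈ Z ∨ (v ∈ nbhd G Z ∧ v ≠ w)) →
      (v ∈ ((Z ∪ nbhd G Z)ᶜ : Set V) ∨ v = w) → False := by
    rintro v (hv | ⟨hv, hvw⟩) (hc | rfl)
    · exact hc (Or.inl hv)
    · exact hwN.1 hv
    · exact hc (Or.inr hv)
    · exact hvw rfl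
  have hclassZ : ∀ u : Z, ∀ v : V, v ∈ s(u.1, f u) → v ∈ Z ∨ (v ∈ nbhd G Z ∧ v ≠ w) := by
    intro u v hv
    rcases Sym2.mem_iff.mp hv with rfl | rfl
    · exact Or.inl u.2
    · exact Or.inr ⟨(hf u).1, (hf u).2.1⟩
  -- edges of the lifted matching are G-edges
  have hliftedge : ∀ e ∈ M', Sym2.map g e ∈ G.edgeSet := by
    intro e1 he1
    revert he1
    induction e1 using Sym2.ind with
    | _ a b =>
      intro he1
      have hadj : (struction G Z).Adj a b := (SimpleGraph.mem_edgeSet _).mp (hM'.1 _ he1)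
      rw [Sym2.map_pair_eq, SimpleGraph.mem_edgeSet]
      rcases a with u | u <;> rcases b with v | v <;>
        simp only [hgdef, Sum.elim_inl, Sum.elim_inr]
      · exact hadj
      · cases v
        exact (hkey u he1).symm
      · cases u
        rw [Sym2.eq_swap] at he1
        exact hkey v he1
      · exact hadj.elim
  -- M is a matching of G
  have hM : IsMatchingSet G (MZ ∪ ML) := by
    constructor
    · intro e he
      rcases Finset.mem_union.mp he with he | he
      · obtain ⟨u, _, rfl⟩ := Finset.mem_image.mp he
        exact (SimpleGraph.mem_edgeSet _).mpr (hf u).2.2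
      · obtain ⟨e1, he1, rfl⟩ := Finset.mem_image.mp he
        exact hliftedge e1 he1
    · intro e he e' he' hne v hv hv'
      rcases Finset.mem_union.mp he with he | he <;>
        rcases Finset.mem_union.mp he' with he' | he'
      · obtain ⟨u, _, rfl⟩ := Finset.mem_image.mp he
        obtain ⟨u', _, rfl⟩ := Finset.mem_image.mp he'
        have huu' : u ≠ u' := fun h => hne (by rw [h])
        have hfu'N : f u' ∈ nbhd G Z := (hf u').1
        have hfuN : f u ∈ nbhd G Z := (hf u).1
        rcases Sym2.mem_iff.mp hv with rfl | rfl <;> rcases Sym2.mem_iff.mp hv' with h | h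
        · exact huu' (Subtype.ext h)
        · exact hfu'N.1 (h ▸ u.2)
        · exact hfuN.1 (h.symm ▸ u'.2)
        · exact huu' (hfinj h)
      · obtain ⟨u, _, rfl⟩ := Finset.mem_image.mp he
        obtain ⟨e1, he1, rfl⟩ := Finset.mem_image.mp he'
        exact hcross v (hclassZ u v hv) (hclassL e1 he1 v hv')
      · obtain ⟨e1, he1, rfl⟩ := Finset.mem_image.mp he
        obtain ⟨u, _, rfl⟩ := Finset.mem_image.mp he'
        exact hcross v (hclassZ u v hv') (hclassL e1 he1 v hv)
      · obtain ⟨e1, he1, rfl⟩ := Finset.mem_image.mp he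
        obtain ⟨e2, he2, rfl⟩ := Finset.mem_image.mp he'
        have hne12 : e1 ≠ e2 := fun h => hne (by rw [h])
        obtain ⟨a, ha, hga⟩ := Sym2.mem_map.mp hv
        obtain ⟨b, hb, hgb⟩ := Sym2.mem_map.mp hv'
        obtain rfl : a = b := ginj (by rw [hga, hgb])
        exact hM'.2 e1 he1 e2 he2 hne12 a ha hb
  -- cardinalities
  have hMZcard : MZ.card = Z.ncard := by
    rw [hMZdef, Finset.card_image_of_injective _ ?_, Finset.card_univ,
      Set.ncard_eq_toFinset_card' Z, Set.toFinset_card]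
    intro u u' h
    rcases Sym2.eq_iff.mp h with ⟨h1, _⟩ | ⟨h1, h2⟩
    · exact Subtype.ext h1
    · exact absurd (h1 ▸ u.2) (hf u').1.1
  have hMLcard : ML.card = M'.card :=
    Finset.card_image_of_injective _ (Sym2.map.injective ginj)
  have hdisjM : Disjoint MZ ML := by
    rw [Finset.disjoint_left]
    intro e heZ heL
    obtain ⟨u, _, rfl⟩ := Finset.mem_image.mp heZ
    obtain ⟨e1, he1, heq⟩ := Finset.mem_image.mp heL
    have h1 : (u : V) ∈ s(u.1, f u) := Sym2.mem_mk_left _ _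
    rw [← heq] at h1
    exact hcross u.1 (Or.inl u.2) (hclassL e1 he1 u.1 h1)
  have hcard : (MZ ∪ ML).card = Z.ncard + MMnum (struction G Z) := by
    rw [Finset.card_union_of_disjoint hdisjM, hMZcard, hMLcard, hM'card]
  have := card_le_MMnum G hM
  rw [hcard] at this
  omega


/-- Reduction Rule 3 (struction) is safe:
`MM(G') − 2LP(G') ≤ MM(G) − 2LP(G) + |Z|`. -/
theorem rule_three_safe {V : Type} [Fintype V] (G : SimpleGraph V)
    (hsur : SurplusGE G 1) (Z : Set V) (hZne : Z.Nonempty) (hZind : IndepSet G Z)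
    (hZsur : (nbhd G Z).ncard = Z.ncard + 1) (hNind : IndepSet G (nbhd G Z)) :
    (MMnum (struction G Z) : ℝ) - 2 * LPopt (struction G Z) ≤
      (MMnum G : ℝ) - 2 * LPopt G + (Z.ncard : ℝ) := by
  have hmm : MMnum (struction G Z) + Z.ncard ≤ MMnum G :=
    mm_transfer G Z hsur hZne hZind hZsur
  have hlp : LPopt G - (Z.ncard : ℝ) ≤ LPopt (struction G Z) := by
    refine le_csInf (lp_set_nonempty _) ?_
    rintro w' ⟨x', hx', rfl⟩
    obtain ⟨x, hx, hwx⟩ := fvc_transfer G Z hZind hZsur hNind x' hx'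
    have := LPopt_le G hx
    linarith
  have hmmR : (MMnum (struction G Z) : ℝ) + (Z.ncard : ℝ) ≤ (MMnum G : ℝ) := by
    exact_mod_cast hmm
  linarith
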